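/- The quasi-shuffle product is commutative: for all words w1, w2 in the noncommutative polynomial algebra k⟨A⟩, w1 * w2 = w2 * w1. -/
import Mathlib


open Finsupp Classical

noncomputable section

variable {A : Type} 

/-- The word `w` as a basis element of the free module `k⟨A⟩`. -/
def sing (k : Type) [Field k] (w : List A) : List A →₀ k := Finsupp.single w 1

/-- Left multiplication of a linear combination of words by a letter. -/
def consF (k : Type) [Field k] (a : A) (f : List A →₀ k) : List A →₀ k :=
  f.mapDomain (List.cons a)

/-- Left multiplication by an element of `A ∪ {0}` (with `none` playing the role of `0`). -/
def oconsF (k : Type) [Field k] : Option A → (List A →₀ k) → (List A →₀ k)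
  | none, _ => 0
  | Option.some a, f => consF k a f

/-- The quasi-shuffle product of two words, with structure operation `br : A → A → Option A`
(`none` = 0):  `1*w = w*1 = w` and
`aw₁ * bw₂ = a(w₁*bw₂) + b(aw₁*w₂) + [a,b](w₁*w₂)`. -/
def qsh (k : Type) [Field k] (br : A → A → Option A) : List A → List A → (List A →₀ k)
  | [], w => sing k w
  | a :: u, [] => sing k (a :: u)
  | a :: u, b :: v =>
      consF k a (qsh k br u (b :: v)) + consF k b (qsh k br (a :: u) v)
        + oconsF k (br a b) (qsh k br u v)
  termination_by w1 w2 => w1.length + w2.length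

/-- Linear extension of a map defined on words. -/
def liftOne (k : Type) [Field k] {α β : Type} (f : α → (β →₀ k)) : (α →₀ k) → (β →₀ k) :=
  fun x => x.sum fun u c => c • f u

/-- Bilinear extension of a product defined on words. -/
def liftTwo (k : Type) [Field k] {α β : Type} (f : α → α → (β →₀ k)) :
    (α →₀ k) → (α →₀ k) → (β →₀ k) :=
  fun x y => x.sum fun u cu => y.sum fun v cv => (cu * cv) • f u v

/-- The degree of a word: the sum of the degrees of its letters. -/
def degW (deg : A → ℕ) (w : List A) : ℕ := (w.map deg).sum

/-- The iterated bracket `[S]` of a nonempty sequence of letters (`none` = 0). -/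
def brS (br : A → A → Option A) : List A → Option A
  | [] => none
  | [a] => some a
  | a :: b :: w => (brS br (b :: w)).bind (br a)

/-- The contraction `I[w]` of the word `w` along the composition with list of parts `I`:
consecutive blocks of `w` of lengths given by `I` are contracted via the iterated bracket;
the result is `0` if some bracket vanishes. -/
def contract (k : Type) [Field k] (br : A → A → Option A) : List ℕ → List A → (List A →₀ k)
  | [], w => (match w with | [] => sing k [] | _ => 0)
  | i :: I, w => oconsF k (brS br (w.take i)) (contract k br I (w.drop i))

end

theorem qsh_comm_aux {A k : Type} [Field k]
    (br : A → A → Option A) (hcomm : ∀ a b, br a b = br b a) :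
    ∀ n (w1 w2 : List A), w1.length + w2.length ≤ n →
      qsh k br w1 w2 = qsh k br w2 w1 := by
  intro n
  induction n with
  | zero =>
    intro w1 w2 h
    match w1, w2 with
    | [], [] => rfl
    | a :: u, w2 => simp at h
    | [], b :: v => simp at h
  | succ n ih =>
    intro w1 w2 h
    match w1, w2 with
    | [], [] => rfl
    | [], b :: v => simp [qsh]
    | a :: u, [] => simp [qsh]
    | a :: u, b :: v =>
      simp only [List.length_cons] at h
      simp only [qsh, hcomm a b]
      rw [ih u (b :: v) (by simp; omega), ih (a :: u) v (by simp; omega),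
          ih u v (by omega)]
      abel

/-- The quasi-shuffle product is commutative. -/
theorem quasi_shuffle_comm {A k : Type} [Field k] [CharZero k]
    (deg : A → ℕ) (hpos : ∀ a, 0 < deg a)
    (br : A → A → Option A)
    (hcomm : ∀ a b, br a b = br b a)
    (hassoc : ∀ a b c, (br a b).bind (fun x => br x c) = (br b c).bind (br a))
    (hdeg : ∀ a b c, br a b = some c → deg c = deg a + deg b) :
    ∀ w1 w2 : List A, qsh k br w1 w2 = qsh k br w2 w1 := by
  intro w1 w2
  exact qsh_comm_aux br hcomm (w1.length + w2.length) w1 w2 le_rfl
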